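/- Let A = (Q, Σ, δ, P) be an exact ε-machine with steady state distribution π. Then the limit lim_{L→∞} (P_π(NSYN_L))^{1/L} exists and equals the spectral radius of the nonnegative matrix T(A₂); in other words, the synchronization rate constant src(A) is the largest eigenvalue (spectral radius) of T(A₂), and it satisfies src(A) < 1. -/

import Mathlib

open scoped BigOperators ENNReal

attribute [local instance] Classical.propDecidable

variable {Q A : Type*}

/-- Extension of a partial transition function to words. -/
def stepWord (δ : Q → A → Option Q) : Q → List A → Option Q
  | q, [] => some q
  | q, a :: w => (δ q a).bind fun q' => stepWord δ q' w

/-- Probability of generating a word from a given state. -/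
noncomputable def probWord (P : Q → A → ℝ) (δ : Q → A → Option Q) : Q → List A → ℝ
  | _, [] => 1
  | p, a :: w => P p a * ((δ p a).elim 0 fun p' => probWord P δ p' w)

/-- `w` is a reset word: the set of defined images of all states under `w` is a singleton. -/
def IsResetWord (δ : Q → A → Option Q) (w : List A) : Prop :=
  ∃ r : Q, (∃ q : Q, stepWord δ q w = some r) ∧ ∀ q s : Q, stepWord δ q w = some s → s = r

/-- `w` merges the pair `{p, q}` : the set of defined images of `p` and `q` under `w`
is a singleton. -/
def MergedBy (δ : Q → A → Option Q) (p q : Q) (w : List A) : Prop :=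
  ∃ r : Q, (stepWord δ p w = some r ∨ stepWord δ q w = some r) ∧
    (∀ s : Q, stepWord δ p w = some s → s = r) ∧ ∀ s : Q, stepWord δ q w = some s → s = r

/-- A deadlock pair : a pair of distinct states that no word merges. -/
def IsDeadlockPair (δ : Q → A → Option Q) (p q : Q) : Prop :=
  p ≠ q ∧ ∀ w : List A, ¬ MergedBy δ p q w

/-- An ε-machine. -/
structure EpsMachine (Q A : Type*) [Fintype Q] [Fintype A] : Type _ where
  δ : Q → A → Option Q
  P : Q → A → ℝ
  nonneg : ∀ q a, 0 ≤ P q a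
  sum_one : ∀ q : Q, ∑ a : A, P q a = 1
  zero_iff : ∀ q a, P q a = 0 ↔ δ q a = none
  strong_conn : ∀ p q : Q, ∃ w : List A, stepWord δ p w = some q
  card_alpha : 1 < Fintype.card A
  nonequiv : ∀ p q : Q, p ≠ q → ∃ u : List A, probWord P δ p u ≠ probWord P δ q u

/-- An ε-machine is exact if it admits a reset word. -/
def IsExact [Fintype Q] [Fintype A] (M : EpsMachine Q A) : Prop :=
  ∃ w : List A, IsResetWord M.δ w

/-- Transition function of the pair semi-machine `A₂`. -/
noncomputable def pairStep (δ : Q → A → Option Q) (pq : Q × Q) (a : A) : Option (Q × Q) :=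
  match δ pq.1 a, δ pq.2 a with
  | some p', some q' => if p' = q' then none else some (p', q')
  | _, _ => none

/-- Weights of the pair semi-machine `A₂`. -/
noncomputable def pairP (δ : Q → A → Option Q) (P : Q → A → ℝ) (pq : Q × Q) (a : A) : ℝ :=
  if pairStep δ pq a = none then 0 else P pq.1 a

/-- The states of the pair semi-machine : ordered pairs of distinct states. -/
abbrev PairState (Q : Type*) := {pq : Q × Q // pq.1 ≠ pq.2}

variable [Fintype Q] [Fintype A]

/-- The transition probability matrix `T(A₂)` of the pair semi-machine. -/
noncomputable def pairMatrix (δ : Q → A → Option Q) (P : Q → A → ℝ) :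
    Matrix (PairState Q) (PairState Q) ℝ :=
  fun s t => ∑ a : A, if pairStep δ s.val a = some t.val then P s.val.1 a else 0

/-- `R^L_{p,q}` : the sum of the `(p,q)`-th row entries of `T(A₂)^L`. -/
noncomputable def RLrow (δ : Q → A → Option Q) (P : Q → A → ℝ) (L : ℕ) (s : PairState Q) : ℝ :=
  ∑ t : PairState Q, (pairMatrix δ P ^ L) s t

/-- `R^L_p = ∑_{q ≠ p} R^L_{p,q}`. -/
noncomputable def RLp (δ : Q → A → Option Q) (P : Q → A → ℝ) (L : ℕ) (p : Q) : ℝ :=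
  ∑ q : Q, if h : p = q then 0 else RLrow δ P L ⟨(p, q), h⟩

/-- `MaxR^L_p = max_{q ≠ p} R^L_{p,q}`. -/
noncomputable def MaxRLp (δ : Q → A → Option Q) (P : Q → A → ℝ) (L : ℕ) (p : Q) : ℝ :=
  sSup {x : ℝ | ∃ (q : Q) (h : p ≠ q), x = RLrow δ P L ⟨(p, q), h⟩}

/-- `π` is a positive stationary (steady state) probability distribution of the Markov chain
on the machine states with transition probabilities `P(p → q) = ∑_{x : p.x = q} P_p(x)`. -/
def IsStationaryDist (δ : Q → A → Option Q) (P : Q → A → ℝ) (π : Q → ℝ) : Prop :=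
  (∀ q, 0 < π q) ∧ (∑ q : Q, π q = 1) ∧
    ∀ q : Q, π q = ∑ p : Q, π p * ∑ a : A, if δ p a = some q then P p a else 0

/-- `P_π(w) = ∑_q π_q P_q(w)`. -/
noncomputable def Ppi (δ : Q → A → Option Q) (P : Q → A → ℝ) (π : Q → ℝ) (w : List A) : ℝ :=
  ∑ q : Q, π q * probWord P δ q w

/-- `P_π(NSYN_L)` : the probability of generating a non-reset word of length `L`. -/
noncomputable def nsynProb (δ : Q → A → Option Q) (P : Q → A → ℝ) (π : Q → ℝ) (L : ℕ) : ℝ :=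
  ∑ w : Fin L → A, if IsResetWord δ (List.ofFn w) then 0 else Ppi δ P π (List.ofFn w)

/-- The maximum row sum (the `‖·‖₁` norm of a nonnegative matrix). -/
noncomputable def maxRowSum {n : Type*} [Fintype n] (T : Matrix n n ℝ) : ℝ :=
  sSup {x : ℝ | ∃ s : n, x = ∑ t : n, T s t}

/-- The belief distribution `φ(w)` of the observer after the machine generated `w`. -/
noncomputable def belief (δ : Q → A → Option Q) (P : Q → A → ℝ) (π : Q → ℝ)
    (w : List A) (q : Q) : ℝ :=
  (∑ p : Q, if stepWord δ p w = some q then π p * probWord P δ p w else 0) / Ppi δ P π w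

/-- `Q_L(w) = 1 - max_q φ(w)_q` : the combined probability of all states other than the
most likely one. -/
noncomputable def QLw (δ : Q → A → Option Q) (P : Q → A → ℝ) (π : Q → ℝ) (w : List A) : ℝ :=
  1 - sSup (Set.range (belief δ P π w))

/-- `P(Q_L > b^L)`. -/
noncomputable def probQLgt (δ : Q → A → Option Q) (P : Q → A → ℝ) (π : Q → ℝ)
    (b : ℝ) (L : ℕ) : ℝ :=
  ∑ w : Fin L → A, if b ^ L < QLw δ P π (List.ofFn w) then Ppi δ P π (List.ofFn w) else 0

/-- The prediction rate constant `prc(A)` : the infimum of all `a > 0` such that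
`P(Q_L > a^L) → 0` as `L → ∞`. -/
noncomputable def prc (δ : Q → A → Option Q) (P : Q → A → ℝ) (π : Q → ℝ) : ℝ :=
  sInf {a : ℝ | 0 < a ∧
    Filter.Tendsto (fun L : ℕ => probQLgt δ P π a L) Filter.atTop (nhds 0)}

/-- `E(Q_L^{1/L})`. -/
noncomputable def EQL (δ : Q → A → Option Q) (P : Q → A → ℝ) (π : Q → ℝ) (L : ℕ) : ℝ :=
  ∑ w : Fin L → A, Ppi δ P π (List.ofFn w) * QLw δ P π (List.ofFn w) ^ ((L : ℝ)⁻¹)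

/-- `E(1/Q_L^{1/L})`, computed in the extended reals (with `1/0 = ∞`). -/
noncomputable def EinvQL (δ : Q → A → Option Q) (P : Q → A → ℝ) (π : Q → ℝ) (L : ℕ) : ℝ≥0∞ :=
  ∑ w : Fin L → A, ENNReal.ofReal (Ppi δ P π (List.ofFn w)) *
    (ENNReal.ofReal (QLw δ P π (List.ofFn w)))⁻¹ ^ ((L : ℝ)⁻¹)

/-- A deadlock component : a nonempty, strongly connected set of deadlock pairs closed
under the action of all letters. -/
def IsDeadlockComponent (δ : Q → A → Option Q) (S : Set (Q × Q)) : Prop :=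
  S.Nonempty ∧ (∀ pq ∈ S, IsDeadlockPair δ pq.1 pq.2) ∧
    (∀ pq ∈ S, ∀ a : A, ∀ r : Q × Q, pairStep δ pq a = some r → r ∈ S) ∧
    ∀ pq ∈ S, ∀ rs ∈ S, ∃ w : List A, stepWord (pairStep δ) pq w = some rs

/-- The states of the edge machine `M_edge` of a component `S` of the pair semi-machine :
pairs `(x, k)` with `k ∈ S` and `P_k(x) > 0`. -/
abbrev EdgeState (δ : Q → A → Option Q) (P : Q → A → ℝ) (S : Set (Q × Q)) :=
  {e : A × (Q × Q) // e.2 ∈ S ∧ 0 < pairP δ P e.2 e.1}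

/-- `ρ` is a stationary (equilibrium) distribution of the edge machine `M_edge`,
whose transition probabilities are `P((x,k) → (y,j)) = P_j(y)·I(x,k,j)`. -/
def IsEdgeStationary (δ : Q → A → Option Q) (P : Q → A → ℝ) (S : Set (Q × Q))
    (ρ : EdgeState δ P S → ℝ) : Prop :=
  (∀ r, 0 ≤ ρ r) ∧ (∑ r : EdgeState δ P S, ρ r = 1) ∧
    ∀ t : EdgeState δ P S, ρ t = ∑ s : EdgeState δ P S, ρ s *
      (if pairStep δ s.val.2 s.val.1 = some t.val.2 then pairP δ P t.val.2 t.val.1 else 0)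

/-- `E_M = ∑_r ρ_r F(r)` where `F((x,(p,q))) = ln (P_p(x) / P_q(x))`. -/
noncomputable def EMval (δ : Q → A → Option Q) (P : Q → A → ℝ) (S : Set (Q × Q))
    (ρ : EdgeState δ P S → ℝ) : ℝ :=
  ∑ r : EdgeState δ P S, ρ r * Real.log (P r.val.2.1 r.val.1 / P r.val.2.2 r.val.1)


/-! ### Auxiliary lemmas -/

section WordLemmas
variable {Q A : Type*}

theorem stepWord_append (δ : Q → A → Option Q) (p : Q) (u v : List A) :
    stepWord δ p (u ++ v) = (stepWord δ p u).bind fun q => stepWord δ q v := by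
  induction u generalizing p with
  | nil => simp [stepWord]
  | cons a u ih =>
    simp only [List.cons_append, stepWord]
    cases δ p a with
    | none => simp
    | some q => simp [ih]

theorem probWord_nonneg {P : Q → A → ℝ} (hP : ∀ q a, 0 ≤ P q a) (δ : Q → A → Option Q)
    (w : List A) (p : Q) : 0 ≤ probWord P δ p w := by
  induction w generalizing p with
  | nil => norm_num [probWord]
  | cons a w ih =>
    refine mul_nonneg (hP p a) ?_
    cases δ p a with
    | none => simp
    | some q => simpa using ih q

theorem probWord_pos {P : Q → A → ℝ} (hP : ∀ q a, 0 ≤ P q a)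
    (hz : ∀ q a, P q a = 0 ↔ δ q a = none) {w : List A} {p q : Q}
    (h : stepWord δ p w = some q) : 0 < probWord P δ p w := by
  induction w generalizing p with
  | nil => norm_num [probWord]
  | cons a w ih =>
    rw [stepWord] at h
    cases hd : δ p a with
    | none => rw [hd] at h; simp at h
    | some p1 =>
      rw [hd] at h
      simp only [Option.bind_some] at h
      have hPpa : 0 < P p a := by
        rcases lt_or_eq_of_le (hP p a) with h' | h'
        · exact h'
        · exact absurd hd (by rw [(hz p a).mp h'.symm]; simp)
      rw [probWord, hd]
      simpa using mul_pos hPpa (ih h)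

theorem probWord_eq_zero {P : Q → A → ℝ}
    (hz : ∀ q a, P q a = 0 ↔ δ q a = none) {w : List A} {p : Q}
    (h : stepWord δ p w = none) : probWord P δ p w = 0 := by
  induction w generalizing p with
  | nil => simp [stepWord] at h
  | cons a w ih =>
    rw [stepWord] at h
    cases hd : δ p a with
    | none => rw [probWord, hd, (hz p a).mpr hd]; simp
    | some p1 =>
      rw [hd] at h
      simp only [Option.bind_some] at h
      rw [probWord, hd]
      simp [ih h]

theorem probWord_append {P : Q → A → ℝ} (δ : Q → A → Option Q) {u : List A} {p q : Q}
    (h : stepWord δ p u = some q) (v : List A) :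
    probWord P δ p (u ++ v) = probWord P δ p u * probWord P δ q v := by
  induction u generalizing p with
  | nil =>
    simp only [stepWord, Option.some_inj] at h
    subst h; simp [probWord]
  | cons a u ih =>
    rw [stepWord] at h
    cases hd : δ p a with
    | none => rw [hd] at h; simp at h
    | some p1 =>
      rw [hd] at h
      simp only [Option.bind_some] at h
      simp only [List.cons_append, probWord, hd, Option.elim_some, mul_assoc]
      rw [ih h]

theorem pairStep_some {δ : Q → A → Option Q} {pq y : Q × Q} {a : A}
    (h : pairStep δ pq a = some y) :
    δ pq.1 a = some y.1 ∧ δ pq.2 a = some y.2 ∧ y.1 ≠ y.2 := by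
  rw [pairStep] at h
  cases h1 : δ pq.1 a with
  | none => rw [h1] at h; simp at h
  | some p' =>
    cases h2 : δ pq.2 a with
    | none => rw [h1, h2] at h; simp at h
    | some q' =>
      rw [h1, h2] at h
      dsimp only at h
      by_cases he : p' = q'
      · rw [if_pos he] at h; simp at h
      · rw [if_neg he] at h
        simp only [Option.some_inj] at h
        subst h
        exact ⟨rfl, rfl, he⟩

theorem pairStep_eq_some {δ : Q → A → Option Q} {pq y : Q × Q} {a : A}
    (h1 : δ pq.1 a = some y.1) (h2 : δ pq.2 a = some y.2) (hne : y.1 ≠ y.2) :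
    pairStep δ pq a = some y := by
  rw [pairStep, h1, h2]
  dsimp only
  rw [if_neg hne]

theorem pairStepWord_iff {δ : Q → A → Option Q} {p q : Q} (hpq : p ≠ q)
    (w : List A) (p' q' : Q) :
    stepWord (pairStep δ) (p, q) w = some (p', q') ↔
      stepWord δ p w = some p' ∧ stepWord δ q w = some q' ∧ p' ≠ q' := by
  induction w generalizing p q with
  | nil =>
    simp only [stepWord, Option.some_inj, Prod.mk.injEq]
    constructor
    · rintro ⟨rfl, rfl⟩; exact ⟨rfl, rfl, hpq⟩
    · rintro ⟨rfl, rfl, _⟩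
      exact ⟨rfl, rfl⟩
  | cons a w ih =>
    constructor
    · intro h
      rw [stepWord] at h
      cases hps : pairStep δ (p, q) a with
      | none => rw [hps] at h; simp at h
      | some y =>
        rw [hps] at h
        simp only [Option.bind_some] at h
        obtain ⟨hd1, hd2, hy⟩ := pairStep_some hps
        have h' := h
        rw [show y = (y.1, y.2) from rfl] at h'
        obtain ⟨e1, e2, e3⟩ := (ih hy).mp h'
        refine ⟨?_, ?_, e3⟩
        · rw [stepWord, hd1]; simpa using e1
        · rw [stepWord, hd2]; simpa using e2
    · rintro ⟨h1, h2, hne⟩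
      rw [stepWord] at h1 h2
      cases hd1 : δ p a with
      | none => rw [hd1] at h1; simp at h1
      | some p1 =>
        cases hd2 : δ q a with
        | none => rw [hd2] at h2; simp at h2
        | some q1 =>
          rw [hd1] at h1; rw [hd2] at h2
          simp only [Option.bind_some] at h1 h2
          have hne1 : p1 ≠ q1 := by
            rintro rfl
            rw [h1] at h2
            exact hne (Option.some_inj.mp h2)
          have hps : pairStep δ (p, q) a = some (p1, q1) := pairStep_eq_some hd1 hd2 hne1
          rw [stepWord, hps]
          simpa using (ih hne1).mpr ⟨h1, h2, hne⟩

theorem pairStepWord_ne {δ : Q → A → Option Q} {s y : Q × Q} (hs : s.1 ≠ s.2)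
    {w : List A} (h : stepWord (pairStep δ) s w = some y) : y.1 ≠ y.2 := by
  obtain ⟨p, q⟩ := s
  obtain ⟨p', q'⟩ := y
  exact ((pairStepWord_iff hs w p' q').mp h).2.2

end WordLemmas


section MatrixLemmas
variable {Q A : Type*} [Fintype Q] [Fintype A]

/-- Splitting off the first letter of a word. -/
def consE (A : Type*) (n : ℕ) : A × (Fin n → A) ≃ (Fin (n + 1) → A) where
  toFun p := Fin.cons p.1 p.2
  invFun f := (f 0, fun i => f i.succ)
  left_inv := by rintro ⟨a, w⟩; simp
  right_inv f := by
    funext i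
    refine Fin.cases ?_ ?_ i
    · simp
    · intro j; simp

theorem sum_word_succ {M : Type*} [AddCommMonoid M] {A : Type*} [Fintype A] (n : ℕ)
    (f : (Fin (n + 1) → A) → M) :
    ∑ w : Fin (n + 1) → A, f w = ∑ a : A, ∑ w : Fin n → A, f (Fin.cons a w) := by
  rw [← (consE A n).sum_comp f, Fintype.sum_prod_type]
  rfl

theorem ofFn_cons {A : Type*} {n : ℕ} (a : A) (w : Fin n → A) :
    List.ofFn (Fin.cons a w) = a :: List.ofFn w := by
  simp [List.ofFn_succ]

theorem sum_probWord (δ : Q → A → Option Q) (P : Q → A → ℝ)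
    (hz : ∀ q a, P q a = 0 ↔ δ q a = none) (hsum : ∀ q, ∑ a : A, P q a = 1)
    (n : ℕ) (p : Q) : ∑ w : Fin n → A, probWord P δ p (List.ofFn w) = 1 := by
  induction n generalizing p with
  | zero => rw [Fintype.sum_unique]; simp [probWord]
  | succ n ih =>
    rw [sum_word_succ n (fun w => probWord P δ p (List.ofFn w))]
    have key : ∀ a : A, (∑ w : Fin n → A,
        probWord P δ p (List.ofFn (Fin.cons a w))) = P p a := by
      intro a
      simp only [ofFn_cons]
      cases hd : δ p a with
      | none =>
        simp [probWord, hd, (hz p a).mpr hd]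
      | some p1 =>
        simp only [probWord, hd, Option.elim_some, ← Finset.mul_sum, ih p1, mul_one]
    rw [Finset.sum_congr rfl fun a _ => key a]
    exact hsum p

theorem probWord_le_one (δ : Q → A → Option Q) (P : Q → A → ℝ)
    (hP : ∀ q a, 0 ≤ P q a) (hz : ∀ q a, P q a = 0 ↔ δ q a = none)
    (hsum : ∀ q, ∑ a : A, P q a = 1) (p : Q) (l : List A) :
    probWord P δ p l ≤ 1 := by
  have h := sum_probWord δ P hz hsum l.length p
  have h1 : probWord P δ p (List.ofFn l.get) ≤ 1 := by
    rw [← h]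
    exact Finset.single_le_sum (fun w _ => probWord_nonneg hP δ _ p) (Finset.mem_univ _)
  simpa [List.ofFn_get] using h1

set_option maxHeartbeats 1000000 in
theorem pairMatrix_pow_apply (δ : Q → A → Option Q) (P : Q → A → ℝ)
    (L : ℕ) (s t : PairState Q) :
    (pairMatrix δ P ^ L) s t =
      ∑ w : Fin L → A, if stepWord (pairStep δ) s.val (List.ofFn w) = some t.val
        then probWord P δ s.val.1 (List.ofFn w) else 0 := by
  induction L generalizing s with
  | zero =>
    rw [pow_zero, Fintype.sum_unique]
    simp only [List.ofFn_zero, stepWord, probWord]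
    by_cases h : s = t
    · subst h; rw [Matrix.one_apply_eq, if_pos rfl]
    · rw [Matrix.one_apply_ne h, if_neg (fun hh => h (Subtype.ext (Option.some_inj.mp hh)))]
  | succ L ih =>
    have key : ∀ (a : A) (w : Fin L → A),
        (∑ u : PairState Q,
          (if pairStep δ s.val a = some u.val then P s.val.1 a else 0) *
            (if stepWord (pairStep δ) u.val (List.ofFn w) = some t.val
              then probWord P δ u.val.1 (List.ofFn w) else 0)) =
        (if stepWord (pairStep δ) s.val (a :: List.ofFn w) = some t.val
          then probWord P δ s.val.1 (a :: List.ofFn w) else 0) := by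
      intro a w
      cases hps : pairStep δ s.val a with
      | none =>
        have hstep : stepWord (pairStep δ) s.val (a :: List.ofFn w) = none := by
          rw [stepWord, hps]; rfl
        simp [hstep, hps]
      | some y =>
        obtain ⟨hd1, hd2, hy⟩ := pairStep_some hps
        have hstep : stepWord (pairStep δ) s.val (a :: List.ofFn w)
            = stepWord (pairStep δ) y (List.ofFn w) := by
          rw [stepWord, hps]; rfl
        have hprob : probWord P δ s.val.1 (a :: List.ofFn w)
            = P s.val.1 a * probWord P δ y.1 (List.ofFn w) := by
          rw [probWord, hd1]; rfl
        rw [Finset.sum_eq_single (⟨y, hy⟩ : PairState Q)]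
        · rw [if_pos rfl, hstep, hprob, mul_ite, mul_zero]
        · intro u _ hu
          rw [if_neg, zero_mul]
          intro hh
          exact hu (Subtype.ext (Option.some_inj.mp hh).symm)
        · intro hmem
          exact absurd (Finset.mem_univ _) hmem
    calc (pairMatrix δ P ^ (L + 1)) s t
        = ∑ u : PairState Q, (pairMatrix δ P) s u * (pairMatrix δ P ^ L) u t := by
          rw [pow_succ', Matrix.mul_apply]
      _ = ∑ u : PairState Q, ∑ a : A, ∑ w : Fin L → A,
            (if pairStep δ s.val a = some u.val then P s.val.1 a else 0) *
              (if stepWord (pairStep δ) u.val (List.ofFn w) = some t.val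
                then probWord P δ u.val.1 (List.ofFn w) else 0) := by
          refine Finset.sum_congr rfl fun u _ => ?_
          rw [pairMatrix, ih, Finset.sum_mul]
          exact Finset.sum_congr rfl fun a _ => Finset.mul_sum _ _ _
      _ = ∑ a : A, ∑ u : PairState Q, ∑ w : Fin L → A,
            (if pairStep δ s.val a = some u.val then P s.val.1 a else 0) *
              (if stepWord (pairStep δ) u.val (List.ofFn w) = some t.val
                then probWord P δ u.val.1 (List.ofFn w) else 0) := Finset.sum_comm
      _ = ∑ a : A, ∑ w : Fin L → A, ∑ u : PairState Q,
            (if pairStep δ s.val a = some u.val then P s.val.1 a else 0) *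
              (if stepWord (pairStep δ) u.val (List.ofFn w) = some t.val
                then probWord P δ u.val.1 (List.ofFn w) else 0) :=
          Finset.sum_congr rfl fun a _ => Finset.sum_comm
      _ = ∑ a : A, ∑ w : Fin L → A,
            (if stepWord (pairStep δ) s.val (a :: List.ofFn w) = some t.val
              then probWord P δ s.val.1 (a :: List.ofFn w) else 0) :=
          Finset.sum_congr rfl fun a _ => Finset.sum_congr rfl fun w _ => key a w
      _ = ∑ w : Fin (L + 1) → A,
            (if stepWord (pairStep δ) s.val (List.ofFn w) = some t.val
              then probWord P δ s.val.1 (List.ofFn w) else 0) := by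
          rw [sum_word_succ L (fun w => if stepWord (pairStep δ) s.val (List.ofFn w) = some t.val
              then probWord P δ s.val.1 (List.ofFn w) else 0)]
          exact Finset.sum_congr rfl fun a _ => Finset.sum_congr rfl fun w _ => by
            rw [ofFn_cons]

theorem rowSum_pow_eq (δ : Q → A → Option Q) (P : Q → A → ℝ) (L : ℕ) (s : PairState Q) :
    ∑ t : PairState Q, (pairMatrix δ P ^ L) s t =
      ∑ w : Fin L → A, if (stepWord (pairStep δ) s.val (List.ofFn w)).isSome
        then probWord P δ s.val.1 (List.ofFn w) else 0 := by
  simp only [pairMatrix_pow_apply]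
  rw [Finset.sum_comm]
  refine Finset.sum_congr rfl fun w _ => ?_
  cases hX : stepWord (pairStep δ) s.val (List.ofFn w) with
  | none => simp [hX]
  | some y =>
    have hy : y.1 ≠ y.2 := pairStepWord_ne s.property hX
    rw [Finset.sum_eq_single (⟨y, hy⟩ : PairState Q)]
    · simp
    · intro u _ hu
      rw [if_neg]
      intro hh
      exact hu (Subtype.ext (Option.some_inj.mp hh).symm)
    · intro hmem
      exact absurd (Finset.mem_univ _) hmem

theorem pairMatrix_pow_nonneg (δ : Q → A → Option Q) (P : Q → A → ℝ)
    (hP : ∀ q a, 0 ≤ P q a) (L : ℕ) (s t : PairState Q) :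
    0 ≤ (pairMatrix δ P ^ L) s t := by
  rw [pairMatrix_pow_apply]
  refine Finset.sum_nonneg fun w _ => ?_
  by_cases h : stepWord (pairStep δ) s.val (List.ofFn w) = some t.val
  · rw [if_pos h]; exact probWord_nonneg hP δ _ _
  · rw [if_neg h]

/-- Total sum of entries of `T(A₂)^L`. -/
noncomputable def SS (δ : Q → A → Option Q) (P : Q → A → ℝ) (L : ℕ) : ℝ :=
  ∑ s : PairState Q, ∑ t : PairState Q, (pairMatrix δ P ^ L) s t

theorem SS_nonneg (δ : Q → A → Option Q) (P : Q → A → ℝ)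
    (hP : ∀ q a, 0 ≤ P q a) (L : ℕ) : 0 ≤ SS δ P L :=
  Finset.sum_nonneg fun s _ => Finset.sum_nonneg fun t _ =>
    pairMatrix_pow_nonneg δ P hP L s t

theorem SS_add_le (δ : Q → A → Option Q) (P : Q → A → ℝ)
    (hP : ∀ q a, 0 ≤ P q a) (L M : ℕ) : SS δ P (L + M) ≤ SS δ P L * SS δ P M := by
  have hA := pairMatrix_pow_nonneg δ P hP L
  have hB := pairMatrix_pow_nonneg δ P hP M
  calc SS δ P (L + M)
      = ∑ s : PairState Q, ∑ u : PairState Q, (pairMatrix δ P ^ L) s u *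
          (∑ t : PairState Q, (pairMatrix δ P ^ M) u t) := by
        unfold SS
        rw [pow_add]
        simp only [Matrix.mul_apply, Finset.mul_sum]
        refine Finset.sum_congr rfl fun s _ => ?_
        rw [Finset.sum_comm]
    _ ≤ ∑ s : PairState Q, ∑ u : PairState Q, (pairMatrix δ P ^ L) s u * SS δ P M := by
        refine Finset.sum_le_sum fun s _ => Finset.sum_le_sum fun u _ => ?_
        refine mul_le_mul_of_nonneg_left ?_ (hA s u)
        exact Finset.single_le_sum (fun u' _ => Finset.sum_nonneg fun t _ => hB u' t)
          (Finset.mem_univ u)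
    _ = SS δ P L * SS δ P M := by
        unfold SS
        rw [Finset.sum_mul]
        refine Finset.sum_congr rfl fun s _ => ?_
        rw [Finset.sum_mul]

end MatrixLemmas


section ProbLemmas
variable {Q A : Type*} [Fintype Q] [Fintype A]

theorem stepWord_isSome_of_probWord_ne {δ : Q → A → Option Q} {P : Q → A → ℝ}
    (hz : ∀ q a, P q a = 0 ↔ δ q a = none) {p : Q} {w : List A}
    (h : probWord P δ p w ≠ 0) : ∃ q, stepWord δ p w = some q := by
  cases hX : stepWord δ p w with
  | none => exact absurd (probWord_eq_zero hz hX) h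
  | some q => exact ⟨q, rfl⟩

theorem not_reset_of_pair_alive {δ : Q → A → Option Q} {s : Q × Q} (hs : s.1 ≠ s.2)
    {l : List A} (h : (stepWord (pairStep δ) s l).isSome) : ¬ IsResetWord δ l := by
  rintro ⟨r, _, hall⟩
  obtain ⟨y, hy⟩ := Option.isSome_iff_exists.mp h
  obtain ⟨p, q⟩ := s
  obtain ⟨h1, h2, hne⟩ := (pairStepWord_iff hs l y.1 y.2).mp (by simpa using hy)
  exact hne ((hall p y.1 h1).trans (hall q y.2 h2).symm)

theorem nsynProb_nonneg (δ : Q → A → Option Q) (P : Q → A → ℝ) (π : Q → ℝ)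
    (hP : ∀ q a, 0 ≤ P q a) (hπ : ∀ q, 0 ≤ π q) (L : ℕ) :
    0 ≤ nsynProb δ P π L := by
  refine Finset.sum_nonneg fun w _ => ?_
  by_cases h : IsResetWord δ (List.ofFn w)
  · rw [if_pos h]
  · rw [if_neg h]
    exact Finset.sum_nonneg fun q _ => mul_nonneg (hπ q) (probWord_nonneg hP δ _ q)

theorem nsynProb_le_SS (δ : Q → A → Option Q) (P : Q → A → ℝ) (π : Q → ℝ)
    (hP : ∀ q a, 0 ≤ P q a) (hz : ∀ q a, P q a = 0 ↔ δ q a = none)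
    (hπ : ∀ q, 0 < π q) (hπ1 : ∑ q : Q, π q = 1) (L : ℕ) :
    nsynProb δ P π L ≤ SS δ P L := by
  have hπle : ∀ q, π q ≤ 1 := by
    intro q
    rw [← hπ1]
    exact Finset.single_le_sum (fun q' _ => (hπ q').le) (Finset.mem_univ q)
  have hSS : SS δ P L = ∑ w : Fin L → A, ∑ s : PairState Q,
      (if (stepWord (pairStep δ) s.val (List.ofFn w)).isSome
        then probWord P δ s.val.1 (List.ofFn w) else 0) := by
    unfold SS
    calc ∑ s : PairState Q, ∑ t : PairState Q, (pairMatrix δ P ^ L) s t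
        = ∑ s : PairState Q, ∑ w : Fin L → A,
            (if (stepWord (pairStep δ) s.val (List.ofFn w)).isSome
              then probWord P δ s.val.1 (List.ofFn w) else 0) :=
          Finset.sum_congr rfl fun s _ => rowSum_pow_eq δ P L s
      _ = _ := Finset.sum_comm
  rw [hSS]
  refine Finset.sum_le_sum fun w _ => ?_
  set l := List.ofFn w with hl
  by_cases hres : IsResetWord δ l
  · rw [if_pos hres]
    refine Finset.sum_nonneg fun s _ => ?_
    by_cases h : (stepWord (pairStep δ) s.val l).isSome
    · rw [if_pos h]; exact probWord_nonneg hP δ _ _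
    · rw [if_neg h]
  · rw [if_neg hres]
    have key : ∀ q : Q, π q * probWord P δ q l ≤ ∑ s : PairState Q,
        if s.val.1 = q then (if (stepWord (pairStep δ) s.val l).isSome
          then probWord P δ s.val.1 l else 0) else 0 := by
      intro q
      by_cases hq0 : probWord P δ q l = 0
      · rw [hq0, mul_zero]
        refine Finset.sum_nonneg fun s _ => ?_
        by_cases h1 : s.val.1 = q
        · rw [if_pos h1]
          by_cases h2 : (stepWord (pairStep δ) s.val l).isSome
          · rw [if_pos h2]; exact probWord_nonneg hP δ _ _
          · rw [if_neg h2]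
        · rw [if_neg h1]
      · obtain ⟨q', hq'⟩ := stepWord_isSome_of_probWord_ne hz hq0
        rw [IsResetWord] at hres
        push_neg at hres
        obtain ⟨p0, s0, h0, hs0⟩ := hres q' ⟨q, hq'⟩
        have hpq : q ≠ p0 := by
          rintro rfl
          rw [h0] at hq'
          exact hs0 (Option.some_inj.mp hq')
        have halive : stepWord (pairStep δ) (q, p0) l = some (q', s0) :=
          (pairStepWord_iff hpq l q' s0).mpr ⟨hq', h0, fun h => hs0 h.symm⟩
        calc π q * probWord P δ q l ≤ probWord P δ q l := by
              nlinarith [probWord_nonneg hP δ l q, hπle q, (hπ q).le]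
          _ = (if ((⟨(q, p0), hpq⟩ : PairState Q).val.1 = q) then
                (if (stepWord (pairStep δ) (⟨(q, p0), hpq⟩ : PairState Q).val l).isSome
                  then probWord P δ (⟨(q, p0), hpq⟩ : PairState Q).val.1 l else 0) else 0) := by
              rw [if_pos rfl, if_pos (by rw [halive]; rfl)]
          _ ≤ _ := by
              refine Finset.single_le_sum (f := fun s : PairState Q =>
                if s.val.1 = q then (if (stepWord (pairStep δ) s.val l).isSome
                  then probWord P δ s.val.1 l else 0) else 0) (fun s _ => ?_)
                (Finset.mem_univ _)
              by_cases h1 : s.val.1 = q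
              · rw [if_pos h1]
                by_cases h2 : (stepWord (pairStep δ) s.val l).isSome
                · rw [if_pos h2]; exact probWord_nonneg hP δ _ _
                · rw [if_neg h2]
              · rw [if_neg h1]
    calc Ppi δ P π l ≤ ∑ q : Q, ∑ s : PairState Q,
          if s.val.1 = q then (if (stepWord (pairStep δ) s.val l).isSome
            then probWord P δ s.val.1 l else 0) else 0 :=
          Finset.sum_le_sum fun q _ => key q
      _ = ∑ s : PairState Q, ∑ q : Q,
          if s.val.1 = q then (if (stepWord (pairStep δ) s.val l).isSome
            then probWord P δ s.val.1 l else 0) else 0 := Finset.sum_comm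
      _ = ∑ s : PairState Q, (if (stepWord (pairStep δ) s.val l).isSome
            then probWord P δ s.val.1 l else 0) := by
          refine Finset.sum_congr rfl fun s _ => ?_
          rw [Finset.sum_ite_eq]
          exact if_pos (Finset.mem_univ _)

theorem pi_row_le_nsynProb (δ : Q → A → Option Q) (P : Q → A → ℝ) (π : Q → ℝ)
    (hP : ∀ q a, 0 ≤ P q a) (hπ : ∀ q, 0 ≤ π q) (L : ℕ) (s : PairState Q) :
    π s.val.1 * (∑ t : PairState Q, (pairMatrix δ P ^ L) s t) ≤ nsynProb δ P π L := by
  rw [rowSum_pow_eq, Finset.mul_sum]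
  refine Finset.sum_le_sum fun w _ => ?_
  set l := List.ofFn w with hl
  by_cases h : (stepWord (pairStep δ) s.val l).isSome
  · rw [if_pos h, if_neg (not_reset_of_pair_alive s.property h)]
    exact Finset.single_le_sum (f := fun q => π q * probWord P δ q l)
      (fun q _ => mul_nonneg (hπ q) (probWord_nonneg hP δ _ q)) (Finset.mem_univ s.val.1)
  · rw [if_neg h, mul_zero]
    by_cases hres : IsResetWord δ l
    · rw [if_pos hres]
    · rw [if_neg hres]
      exact Finset.sum_nonneg fun q _ => mul_nonneg (hπ q) (probWord_nonneg hP δ _ q)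

theorem exists_pmin (δ : Q → A → Option Q) (P : Q → A → ℝ)
    (hP : ∀ q a, 0 ≤ P q a) (hz : ∀ q a, P q a = 0 ↔ δ q a = none) :
    ∃ c : ℝ, 0 < c ∧ ∀ (w : List A) (p q : Q), stepWord δ p w = some q →
      c ^ w.length ≤ probWord P δ p w := by
  classical
  set F := (Finset.univ.filter (fun qa : Q × A => 0 < P qa.1 qa.2)).image
    (fun qa : Q × A => P qa.1 qa.2) with hF
  set G := insert (1 : ℝ) F with hG
  have hGne : G.Nonempty := ⟨1, Finset.mem_insert_self _ _⟩
  set c := G.min' hGne with hc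
  have hGpos : ∀ x ∈ G, 0 < x := by
    intro x hx
    rw [hG] at hx
    rcases Finset.mem_insert.mp hx with h | h
    · rw [h]; norm_num
    · obtain ⟨qa, hqa, hval⟩ := Finset.mem_image.mp h
      rw [← hval]
      exact (Finset.mem_filter.mp hqa).2
  have hcpos : 0 < c := hGpos _ (G.min'_mem hGne)
  refine ⟨c, hcpos, fun w => ?_⟩
  induction w with
  | nil => intro p q _; simp [probWord]
  | cons a w ih =>
    intro p q h
    rw [stepWord] at h
    cases hd : δ p a with
    | none => rw [hd] at h; simp at h
    | some p1 =>
      rw [hd] at h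
      simp only [Option.bind_some] at h
      have hPpa : 0 < P p a := by
        rcases lt_or_eq_of_le (hP p a) with h' | h'
        · exact h'
        · exact absurd hd (by rw [(hz p a).mp h'.symm]; simp)
      have hcle : c ≤ P p a := by
        refine Finset.min'_le _ _ ?_
        rw [hG]
        refine Finset.mem_insert_of_mem ?_
        exact Finset.mem_image.mpr ⟨(p, a), Finset.mem_filter.mpr ⟨Finset.mem_univ _, hPpa⟩, rfl⟩
      rw [List.length_cons, probWord, hd, Option.elim_some, pow_succ']
      exact mul_le_mul hcle (ih p1 q h) (pow_nonneg hcpos.le _)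
        (hP p a)

theorem SS_decay (δ : Q → A → Option Q) (P : Q → A → ℝ)
    (hP : ∀ q a, 0 ≤ P q a) {m : ℕ} {θ : ℝ}
    (hθ : ∀ u : PairState Q, ∑ t : PairState Q, (pairMatrix δ P ^ m) u t ≤ θ)
    (L : ℕ) : SS δ P (L + m) ≤ SS δ P L * θ := by
  have hA := pairMatrix_pow_nonneg δ P hP L
  calc SS δ P (L + m)
      = ∑ s : PairState Q, ∑ u : PairState Q, (pairMatrix δ P ^ L) s u *
          (∑ t : PairState Q, (pairMatrix δ P ^ m) u t) := by
        unfold SS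
        rw [pow_add]
        simp only [Matrix.mul_apply, Finset.mul_sum]
        refine Finset.sum_congr rfl fun s _ => ?_
        rw [Finset.sum_comm]
    _ ≤ ∑ s : PairState Q, ∑ u : PairState Q, (pairMatrix δ P ^ L) s u * θ := by
        refine Finset.sum_le_sum fun s _ => Finset.sum_le_sum fun u _ => ?_
        exact mul_le_mul_of_nonneg_left (hθ u) (hA s u)
    _ = SS δ P L * θ := by
        unfold SS
        rw [Finset.sum_mul]
        refine Finset.sum_congr rfl fun s _ => ?_
        rw [Finset.sum_mul]

theorem row_le_of_kill (δ : Q → A → Option Q) (P : Q → A → ℝ)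
    (hP : ∀ q a, 0 ≤ P q a) (hz : ∀ q a, P q a = 0 ↔ δ q a = none)
    (hsum : ∀ q, ∑ a : A, P q a = 1) (s : PairState Q) (l : List A)
    (hdead : stepWord (pairStep δ) s.val l = none) :
    ∑ t : PairState Q, (pairMatrix δ P ^ l.length) s t ≤ 1 - probWord P δ s.val.1 l := by
  rw [rowSum_pow_eq]
  have h1 : (∑ w : Fin l.length → A, probWord P δ s.val.1 (List.ofFn w)) = 1 :=
    sum_probWord δ P hz hsum l.length s.val.1
  have key : ∀ w : Fin l.length → A,
      (if (stepWord (pairStep δ) s.val (List.ofFn w)).isSome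
        then probWord P δ s.val.1 (List.ofFn w) else 0)
      + (if w = l.get then probWord P δ s.val.1 l else 0)
      ≤ probWord P δ s.val.1 (List.ofFn w) := by
    intro w
    by_cases hw : w = l.get
    · subst hw
      have hofn : List.ofFn l.get = l := List.ofFn_get l
      rw [if_pos rfl, hofn, hdead]
      simp
    · rw [if_neg hw, add_zero]
      by_cases h2 : (stepWord (pairStep δ) s.val (List.ofFn w)).isSome
      · rw [if_pos h2]
      · rw [if_neg h2]; exact probWord_nonneg hP δ _ _
  have h2 : (∑ w : Fin l.length → A,
      ((if (stepWord (pairStep δ) s.val (List.ofFn w)).isSome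
        then probWord P δ s.val.1 (List.ofFn w) else 0)
      + (if w = l.get then probWord P δ s.val.1 l else 0))) ≤ 1 := by
    rw [← h1]
    exact Finset.sum_le_sum fun w _ => key w
  rw [Finset.sum_add_distrib] at h2
  have h3 : (∑ w : Fin l.length → A,
      if w = l.get then probWord P δ s.val.1 l else 0) = probWord P δ s.val.1 l := by
    rw [Finset.sum_ite_eq']
    exact if_pos (Finset.mem_univ _)
  rw [h3] at h2
  linarith

end ProbLemmas


section Spectral
variable {n : Type*} [Fintype n] [DecidableEq n]

/-- Sum of all entries of the `L`-th power. -/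
noncomputable def powSum (T : Matrix n n ℝ) (L : ℕ) : ℝ := ∑ s : n, ∑ t : n, (T ^ L) s t

theorem pow_entry_nonneg {T : Matrix n n ℝ} (hT : ∀ s t, 0 ≤ T s t) (L : ℕ) :
    ∀ s t, 0 ≤ (T ^ L) s t := by
  induction L with
  | zero =>
    intro s t
    rw [pow_zero]
    by_cases h : s = t
    · subst h; rw [Matrix.one_apply_eq]; norm_num
    · rw [Matrix.one_apply_ne h]
  | succ L ih =>
    intro s t
    rw [pow_succ, Matrix.mul_apply]
    exact Finset.sum_nonneg fun u _ => mul_nonneg (ih s u) (hT u t)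

theorem abs_pow_le_powSum {T : Matrix n n ℝ} (hT : ∀ s t, 0 ≤ T s t)
    {x : ℝ} (hx : x ∈ spectrum ℝ T) (L : ℕ) : |x| ^ L ≤ powSum T L := by
  have hnn := pow_entry_nonneg hT
  rw [spectrum.mem_iff] at hx
  rw [Matrix.isUnit_iff_isUnit_det, isUnit_iff_ne_zero, not_not] at hx
  obtain ⟨v, hv0, hv⟩ := Matrix.exists_mulVec_eq_zero_iff.mpr hx
  have hTv : T.mulVec v = x • v := by
    have h1 : (algebraMap ℝ (Matrix n n ℝ)) x = x • (1 : Matrix n n ℝ) :=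
      Algebra.algebraMap_eq_smul_one x
    rw [h1, Matrix.sub_mulVec, Matrix.smul_mulVec, Matrix.one_mulVec, sub_eq_zero] at hv
    exact hv.symm
  have hpow : ∀ L : ℕ, (T ^ L).mulVec v = x ^ L • v := by
    intro L
    induction L with
    | zero => rw [pow_zero, pow_zero, Matrix.one_mulVec, one_smul]
    | succ L ih =>
      rw [pow_succ' T L, pow_succ' x L, ← Matrix.mulVec_mulVec, ih, Matrix.mulVec_smul, hTv,
        smul_smul, mul_comm]
  obtain ⟨j, hj⟩ := Function.ne_iff.mp hv0
  have hne : (Finset.univ : Finset n).Nonempty := ⟨j, Finset.mem_univ j⟩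
  obtain ⟨i0, _, hmax⟩ := Finset.exists_max_image Finset.univ (fun i => |v i|) hne
  have hi0pos : 0 < |v i0| :=
    lt_of_lt_of_le (abs_pos.mpr hj) (hmax j (Finset.mem_univ j))
  have hstep : |x| ^ L * |v i0| ≤ powSum T L * |v i0| := by
    have h1 : (x ^ L • v) i0 = ((T ^ L).mulVec v) i0 := by rw [hpow]
    have h2 : ((T ^ L).mulVec v) i0 = ∑ t : n, (T ^ L) i0 t * v t := by
      simp [Matrix.mulVec, dotProduct]
    calc |x| ^ L * |v i0| = |x ^ L * v i0| := by rw [abs_mul, abs_pow]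
      _ = |∑ t : n, (T ^ L) i0 t * v t| := by
          rw [show x ^ L * v i0 = (x ^ L • v) i0 from rfl, h1, h2]
      _ ≤ ∑ t : n, |(T ^ L) i0 t * v t| := Finset.abs_sum_le_sum_abs _ _
      _ ≤ ∑ t : n, (T ^ L) i0 t * |v i0| := by
          refine Finset.sum_le_sum fun t _ => ?_
          rw [abs_mul, abs_of_nonneg (hnn L i0 t)]
          exact mul_le_mul_of_nonneg_left (hmax t (Finset.mem_univ t)) (hnn L i0 t)
      _ = (∑ t : n, (T ^ L) i0 t) * |v i0| := by rw [Finset.sum_mul]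
      _ ≤ powSum T L * |v i0| := by
          refine mul_le_mul_of_nonneg_right ?_ hi0pos.le
          exact Finset.single_le_sum
            (f := fun s : n => ∑ t : n, (T ^ L) s t)
            (fun s _ => Finset.sum_nonneg fun t _ => hnn L s t) (Finset.mem_univ i0)
  exact le_of_mul_le_mul_right hstep hi0pos

theorem spectralRadius_toReal_eq {T : Matrix n n ℝ} {r : ℝ}
    (hmem : r ∈ spectrum ℝ T) (hub : ∀ x ∈ spectrum ℝ T, |x| ≤ r) :
    (spectralRadius ℝ T).toReal = r := by
  have hr0 : 0 ≤ r := le_trans (abs_nonneg r) (hub r hmem)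
  have heq : spectralRadius ℝ T = ENNReal.ofReal r := by
    apply le_antisymm
    · rw [spectralRadius]
      refine iSup₂_le fun k hk => ?_
      rw [← ENNReal.ofReal_coe_nnreal, coe_nnnorm]
      exact ENNReal.ofReal_le_ofReal (by rw [Real.norm_eq_abs]; exact hub k hk)
    · have h1 : ENNReal.ofReal r = (‖r‖₊ : ENNReal) := by
        rw [← ENNReal.ofReal_coe_nnreal, coe_nnnorm, Real.norm_eq_abs, abs_of_nonneg hr0]
      rw [h1, spectralRadius]
      exact le_iSup₂ (f := fun k (_ : k ∈ spectrum ℝ T) => (‖k‖₊ : ENNReal)) r hmem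
  rw [heq, ENNReal.toReal_ofReal hr0]

theorem zero_mem_spectrum_of_nilpotent [Nonempty n] {T : Matrix n n ℝ} {L0 : ℕ}
    (hL0 : T ^ L0 = 0) (hL0ne : L0 ≠ 0) : (0 : ℝ) ∈ spectrum ℝ T := by
  rw [spectrum.mem_iff, map_zero, zero_sub, IsUnit.neg_iff, Matrix.isUnit_iff_isUnit_det,
    isUnit_iff_ne_zero, not_not]
  have h1 : T.det ^ L0 = 0 := by rw [← Matrix.det_pow, hL0, Matrix.det_zero]
  exact (pow_eq_zero_iff hL0ne).mp h1

/-- The main resolvent argument : if all powers have positive entry sums bounded below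
by `r ^ L`, and the entry sums, `L`-th rooted, tend to `r`, then `r` is in the spectrum. -/
theorem mem_spectrum_of_powSum {T : Matrix n n ℝ} (hT : ∀ s t, 0 ≤ T s t) {r : ℝ}
    (hrpos : 0 < r) (hrS : ∀ L, r ^ L ≤ powSum T L)
    (hSlim : Filter.Tendsto (fun L : ℕ => powSum T L ^ ((L : ℝ)⁻¹))
      Filter.atTop (nhds r)) :
    r ∈ spectrum ℝ T := by
  by_contra hrnot
  have hu : IsUnit ((algebraMap ℝ (Matrix n n ℝ)) r - T) := not_not.mp (hrnot ∘ spectrum.mem_iff.mpr)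
  set Mf : ℝ → Matrix n n ℝ := fun lam => lam • (1 : Matrix n n ℝ) - T with hMf
  have halg : ∀ lam : ℝ, (algebraMap ℝ (Matrix n n ℝ)) lam = lam • (1 : Matrix n n ℝ) :=
    fun lam => Algebra.algebraMap_eq_smul_one lam
  have hdet : (Mf r).det ≠ 0 := by
    rw [hMf]
    have := (Matrix.isUnit_iff_isUnit_det _).mp (by rwa [halg] at hu)
    exact isUnit_iff_ne_zero.mp this
  have hMcont : Continuous Mf := by
    refine continuous_matrix fun i j => ?_
    simp only [hMf, Matrix.sub_apply, Matrix.smul_apply, smul_eq_mul]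
    exact (continuous_id.mul continuous_const).sub continuous_const
  have hdcont : Continuous fun lam => (Mf lam).det := hMcont.matrix_det
  set g : ℝ → ℝ := fun lam => ((Mf lam).det)⁻¹ * ∑ s : n, ∑ t : n, (Mf lam).adjugate s t
    with hg
  have hgcont : Filter.Tendsto g (nhds r) (nhds (g r)) := by
    apply Filter.Tendsto.mul
    · exact (hdcont.tendsto r).inv₀ hdet
    · refine tendsto_finset_sum _ fun s _ => tendsto_finset_sum _ fun t _ => ?_
      exact ((hMcont.matrix_adjugate.matrix_elem s t).tendsto r)
  have hgB : ∀ lam : ℝ, (Mf lam).det ≠ 0 → g lam = ∑ s : n, ∑ t : n, (Mf lam)⁻¹ s t := by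
    intro lam hd
    rw [hg]
    simp only [Matrix.inv_def, Matrix.smul_apply, smul_eq_mul, Ring.inverse_eq_inv']
    rw [Finset.mul_sum]
    exact Finset.sum_congr rfl fun s _ => by rw [Finset.mul_sum]
  -- the key lower bound for `g` to the right of `r`
  have key : ∀ lam : ℝ, r < lam → (Mf lam).det ≠ 0 → 1 / (lam - r) ≤ g lam := by
    intro lam hlam hd
    have hlam0 : 0 < lam := hrpos.trans hlam
    set B := (Mf lam)⁻¹ with hB
    have hinv : B * Mf lam = 1 := Matrix.nonsing_inv_mul _ (isUnit_iff_ne_zero.mpr hd)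
    -- telescoping identity
    have htel : ∀ N : ℕ, Mf lam * (∑ L ∈ Finset.range N, (lam ^ (L + 1))⁻¹ • T ^ L)
        = 1 - (lam ^ N)⁻¹ • T ^ N := by
      intro N
      induction N with
      | zero => simp
      | succ N ih =>
        rw [Finset.sum_range_succ, Matrix.mul_add, ih]
        have hculm : (lam ^ (N + 1))⁻¹ * lam = (lam ^ N)⁻¹ := by
          field_simp
          rw [pow_succ, mul_comm]
        have h2 : Mf lam * ((lam ^ (N + 1))⁻¹ • T ^ N)
            = (lam ^ N)⁻¹ • T ^ N - (lam ^ (N + 1))⁻¹ • T ^ (N + 1) := by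
          rw [hMf]
          rw [Matrix.mul_smul, sub_mul, Matrix.smul_mul, one_mul, smul_sub, smul_smul, hculm,
            ← pow_succ' T N]
        rw [h2]
        abel
    -- apply B on the left
    have hNn : ∀ N : ℕ, (∑ L ∈ Finset.range N, (lam ^ (L + 1))⁻¹ • T ^ L)
        = B - (lam ^ N)⁻¹ • (B * T ^ N) := by
      intro N
      have h1 : B * (Mf lam * (∑ L ∈ Finset.range N, (lam ^ (L + 1))⁻¹ • T ^ L))
          = ∑ L ∈ Finset.range N, (lam ^ (L + 1))⁻¹ • T ^ L := by
        rw [← mul_assoc, hinv, one_mul]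
      rw [← h1, htel N, mul_sub, mul_one, Matrix.mul_smul]
    -- entry sums
    have hsum : ∀ N : ℕ, (∑ L ∈ Finset.range N, (lam ^ (L + 1))⁻¹ * powSum T L)
        = g lam - (lam ^ N)⁻¹ * (∑ s : n, ∑ t : n, (B * T ^ N) s t) := by
      intro N
      have h1 : ∀ s t : n, (∑ L ∈ Finset.range N, (lam ^ (L + 1))⁻¹ • T ^ L) s t
          = ∑ L ∈ Finset.range N, (lam ^ (L + 1))⁻¹ * (T ^ L) s t := by
        intro s t
        rw [Matrix.sum_apply]
        exact Finset.sum_congr rfl fun L _ => rfl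
      have h2 : (∑ s : n, ∑ t : n, (∑ L ∈ Finset.range N, (lam ^ (L + 1))⁻¹ • T ^ L) s t)
          = ∑ L ∈ Finset.range N, (lam ^ (L + 1))⁻¹ * powSum T L := by
        calc (∑ s : n, ∑ t : n, (∑ L ∈ Finset.range N, (lam ^ (L + 1))⁻¹ • T ^ L) s t)
            = ∑ s : n, ∑ t : n, ∑ L ∈ Finset.range N, (lam ^ (L + 1))⁻¹ * (T ^ L) s t :=
              Finset.sum_congr rfl fun s _ => Finset.sum_congr rfl fun t _ => h1 s t
          _ = ∑ s : n, ∑ L ∈ Finset.range N, ∑ t : n, (lam ^ (L + 1))⁻¹ * (T ^ L) s t :=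
              Finset.sum_congr rfl fun s _ => Finset.sum_comm
          _ = ∑ L ∈ Finset.range N, ∑ s : n, ∑ t : n, (lam ^ (L + 1))⁻¹ * (T ^ L) s t :=
              Finset.sum_comm
          _ = ∑ L ∈ Finset.range N, (lam ^ (L + 1))⁻¹ * powSum T L := by
              refine Finset.sum_congr rfl fun L _ => ?_
              rw [powSum, Finset.mul_sum]
              exact Finset.sum_congr rfl fun s _ => by rw [Finset.mul_sum]
      rw [← h2, hNn N, hgB lam hd]
      simp only [Matrix.sub_apply, Matrix.smul_apply, smul_eq_mul, Finset.sum_sub_distrib,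
        ← Finset.mul_sum]
      rw [hB]
    -- geometric decay of the error term
    have hgeo : Filter.Tendsto (fun N : ℕ => powSum T N * (lam ^ N)⁻¹) Filter.atTop (nhds 0) := by
      set μ := (r + lam) / 2 with hμ
      have hrμ : r < μ := by rw [hμ]; linarith
      have hμlam : μ < lam := by rw [hμ]; linarith
      have hμpos : 0 < μ := lt_trans hrpos hrμ
      have hev : ∀ᶠ N : ℕ in Filter.atTop, powSum T N ^ ((N : ℝ)⁻¹) < μ :=
        hSlim.eventually_lt_const hrμ
      have hev2 : ∀ᶠ N : ℕ in Filter.atTop, powSum T N * (lam ^ N)⁻¹ ≤ (μ / lam) ^ N := by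
        filter_upwards [hev, Filter.eventually_ge_atTop 1] with N hN hN1
        have hNne : (N : ℝ) ≠ 0 := Nat.cast_ne_zero.mpr (by omega)
        have hSnn : 0 ≤ powSum T N := le_trans (pow_nonneg hrpos.le N) (hrS N)
        have hSN : powSum T N ≤ μ ^ N := by
          have h3 : (powSum T N ^ ((N : ℝ)⁻¹)) ^ (N : ℕ) ≤ μ ^ N :=
            pow_le_pow_left₀ (Real.rpow_nonneg hSnn _) hN.le N
          rwa [← Real.rpow_natCast (powSum T N ^ ((N : ℝ)⁻¹)) N, ← Real.rpow_mul hSnn,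
            inv_mul_cancel₀ hNne, Real.rpow_one] at h3
        rw [div_pow, div_eq_mul_inv]
        exact mul_le_mul_of_nonneg_right hSN (by positivity)
      refine squeeze_zero' ?_ hev2 ?_
      · filter_upwards with N
        have hSnn : 0 ≤ powSum T N := le_trans (pow_nonneg hrpos.le N) (hrS N)
        positivity
      · exact tendsto_pow_atTop_nhds_zero_of_lt_one (by positivity)
          ((div_lt_one hlam0).mpr hμlam)
    -- the error term tends to zero
    have herr : Filter.Tendsto
        (fun N : ℕ => (lam ^ N)⁻¹ * (∑ s : n, ∑ t : n, (B * T ^ N) s t))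
        Filter.atTop (nhds 0) := by
      set CB := ∑ s : n, ∑ u : n, |B s u| with hCB
      have hbound : ∀ N : ℕ, |(lam ^ N)⁻¹ * (∑ s : n, ∑ t : n, (B * T ^ N) s t)|
          ≤ CB * (powSum T N * (lam ^ N)⁻¹) := by
        intro N
        have hnn := pow_entry_nonneg hT N
        have h4 : |∑ s : n, ∑ t : n, (B * T ^ N) s t| ≤ CB * powSum T N := by
          calc |∑ s : n, ∑ t : n, (B * T ^ N) s t|
              ≤ ∑ s : n, |∑ t : n, (B * T ^ N) s t| := Finset.abs_sum_le_sum_abs _ _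
            _ ≤ ∑ s : n, ∑ t : n, |(B * T ^ N) s t| :=
                Finset.sum_le_sum fun s _ => Finset.abs_sum_le_sum_abs _ _
            _ ≤ ∑ s : n, ∑ t : n, ∑ u : n, |B s u| * (T ^ N) u t := by
                refine Finset.sum_le_sum fun s _ => Finset.sum_le_sum fun t _ => ?_
                rw [Matrix.mul_apply]
                refine le_trans (Finset.abs_sum_le_sum_abs _ _) ?_
                refine Finset.sum_le_sum fun u _ => ?_
                rw [abs_mul, abs_of_nonneg (hnn u t)]
            _ = ∑ s : n, ∑ u : n, |B s u| * (∑ t : n, (T ^ N) u t) := by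
                refine Finset.sum_congr rfl fun s _ => ?_
                calc ∑ t : n, ∑ u : n, |B s u| * (T ^ N) u t
                    = ∑ u : n, ∑ t : n, |B s u| * (T ^ N) u t := Finset.sum_comm
                  _ = ∑ u : n, |B s u| * (∑ t : n, (T ^ N) u t) :=
                      Finset.sum_congr rfl fun u _ => (Finset.mul_sum _ _ _).symm
            _ ≤ ∑ s : n, ∑ u : n, |B s u| * powSum T N := by
                refine Finset.sum_le_sum fun s _ => Finset.sum_le_sum fun u _ => ?_
                refine mul_le_mul_of_nonneg_left ?_ (abs_nonneg _)
                exact Finset.single_le_sum (f := fun u' : n => ∑ t : n, (T ^ N) u' t)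
                  (fun u' _ => Finset.sum_nonneg fun t _ => hnn u' t) (Finset.mem_univ u)
            _ = CB * powSum T N := by
                rw [hCB, Finset.sum_mul]
                exact Finset.sum_congr rfl fun s _ => by rw [Finset.sum_mul]
        rw [abs_mul, abs_inv, abs_pow, abs_of_nonneg hlam0.le]
        calc (lam ^ N)⁻¹ * |∑ s : n, ∑ t : n, (B * T ^ N) s t|
            ≤ (lam ^ N)⁻¹ * (CB * powSum T N) :=
              mul_le_mul_of_nonneg_left h4 (by positivity)
          _ = CB * (powSum T N * (lam ^ N)⁻¹) := by ring
      refine squeeze_zero_norm' (Filter.Eventually.of_forall hbound) ?_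
      simpa using hgeo.const_mul CB
    -- partial sums tend to `g lam`
    have hpart : Filter.Tendsto
        (fun N : ℕ => ∑ L ∈ Finset.range N, (lam ^ (L + 1))⁻¹ * powSum T L)
        Filter.atTop (nhds (g lam)) := by
      have h5 : (fun N : ℕ => ∑ L ∈ Finset.range N, (lam ^ (L + 1))⁻¹ * powSum T L)
          = fun N : ℕ => g lam - (lam ^ N)⁻¹ * (∑ s : n, ∑ t : n, (B * T ^ N) s t) :=
        funext hsum
      rw [h5]
      simpa using tendsto_const_nhds.sub herr
    have hgeomle : ∀ N : ℕ, (∑ L ∈ Finset.range N, (lam ^ (L + 1))⁻¹ * r ^ L)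
        ≤ ∑ L ∈ Finset.range N, (lam ^ (L + 1))⁻¹ * powSum T L :=
      fun N => Finset.sum_le_sum fun L _ =>
        mul_le_mul_of_nonneg_left (hrS L) (by positivity)
    have hgeomtend : Filter.Tendsto
        (fun N : ℕ => ∑ L ∈ Finset.range N, (lam ^ (L + 1))⁻¹ * r ^ L)
        Filter.atTop (nhds (1 / (lam - r))) := by
      have hterm : ∀ L : ℕ, (lam ^ (L + 1))⁻¹ * r ^ L = lam⁻¹ * (r / lam) ^ L := by
        intro L
        rw [div_pow, pow_succ, mul_inv, div_eq_mul_inv]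
        ring
      have hrl1 : r / lam < 1 := (div_lt_one hlam0).mpr hlam
      have hrl0 : 0 ≤ r / lam := by positivity
      have hgs := (hasSum_geometric_of_lt_one hrl0 hrl1).tendsto_sum_nat
      have h6 : (fun N : ℕ => ∑ L ∈ Finset.range N, (lam ^ (L + 1))⁻¹ * r ^ L)
          = fun N : ℕ => lam⁻¹ * ∑ L ∈ Finset.range N, (r / lam) ^ L := by
        funext N
        rw [Finset.mul_sum]
        exact Finset.sum_congr rfl fun L _ => hterm L
      have heq2 : (1 : ℝ) / (lam - r) = lam⁻¹ * (1 - r / lam)⁻¹ := by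
        rw [one_div, ← mul_inv]
        congr 1
        field_simp
      rw [h6, heq2]
      exact hgs.const_mul lam⁻¹
    exact le_of_tendsto_of_tendsto' hgeomtend hpart hgeomle
  -- contradiction via a sequence tending to `r` from above
  have hseq : Filter.Tendsto (fun k : ℕ => r + ((k : ℝ) + 1)⁻¹) Filter.atTop (nhds r) := by
    have h7 : Filter.Tendsto (fun k : ℕ => ((k : ℝ) + 1)⁻¹) Filter.atTop (nhds 0) := by
      simpa [one_div] using tendsto_one_div_add_atTop_nhds_zero_nat (𝕜 := ℝ)
    simpa using tendsto_const_nhds.add h7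
  have hdetseq : ∀ᶠ k : ℕ in Filter.atTop, (Mf (r + ((k : ℝ) + 1)⁻¹)).det ≠ 0 :=
    ((hdcont.tendsto r).comp hseq).eventually_ne hdet
  have hgseq : Filter.Tendsto (fun k : ℕ => g (r + ((k : ℝ) + 1)⁻¹))
      Filter.atTop (nhds (g r)) := hgcont.comp hseq
  have hev1 : ∀ᶠ k : ℕ in Filter.atTop, g (r + ((k : ℝ) + 1)⁻¹) < g r + 1 :=
    hgseq.eventually_lt_const (lt_add_one (g r))
  have hev2 : ∀ᶠ k : ℕ in Filter.atTop, g r + 1 < (k : ℝ) + 1 := by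
    have h8 : Filter.Tendsto (fun k : ℕ => (k : ℝ) + 1) Filter.atTop Filter.atTop :=
      Filter.tendsto_atTop_add_const_right Filter.atTop 1 tendsto_natCast_atTop_atTop
    exact h8.eventually_gt_atTop (g r + 1)
  obtain ⟨k, hk1, hk2, hk3⟩ := (hdetseq.and (hev1.and hev2)).exists
  have hrk : r < r + ((k : ℝ) + 1)⁻¹ := lt_add_of_pos_right r (by positivity)
  have hkey := key (r + ((k : ℝ) + 1)⁻¹) hrk hk1
  have h9 : (1 : ℝ) / (r + ((k : ℝ) + 1)⁻¹ - r) = (k : ℝ) + 1 := by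
    rw [add_sub_cancel_left, one_div, inv_inv]
  rw [h9] at hkey
  linarith

end Spectral


section Fekete
variable {n : Type*} [Fintype n] [DecidableEq n]

theorem powSum_add_le {T : Matrix n n ℝ} (hT : ∀ s t, 0 ≤ T s t) (L M : ℕ) :
    powSum T (L + M) ≤ powSum T L * powSum T M := by
  have hA := pow_entry_nonneg hT L
  have hB := pow_entry_nonneg hT M
  calc powSum T (L + M)
      = ∑ s : n, ∑ u : n, (T ^ L) s u * (∑ t : n, (T ^ M) u t) := by
        unfold powSum
        rw [pow_add]
        simp only [Matrix.mul_apply, Finset.mul_sum]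
        refine Finset.sum_congr rfl fun s _ => ?_
        rw [Finset.sum_comm]
    _ ≤ ∑ s : n, ∑ u : n, (T ^ L) s u * powSum T M := by
        refine Finset.sum_le_sum fun s _ => Finset.sum_le_sum fun u _ => ?_
        refine mul_le_mul_of_nonneg_left ?_ (hA s u)
        exact Finset.single_le_sum (f := fun u' : n => ∑ t : n, (T ^ M) u' t)
          (fun u' _ => Finset.sum_nonneg fun t _ => hB u' t) (Finset.mem_univ u)
    _ = powSum T L * powSum T M := by
        unfold powSum
        rw [Finset.sum_mul]
        refine Finset.sum_congr rfl fun s _ => ?_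
        rw [Finset.sum_mul]

theorem powSum_tendsto {T : Matrix n n ℝ} (hT : ∀ s t, 0 ≤ T s t) {c : ℝ} (hc : 0 < c)
    (hcS : ∀ L : ℕ, c ^ L ≤ powSum T L) :
    ∃ r : ℝ, 0 < r ∧ (∀ L, r ^ L ≤ powSum T L) ∧
      Filter.Tendsto (fun L : ℕ => powSum T L ^ ((L : ℝ)⁻¹)) Filter.atTop (nhds r) := by
  have hSpos : ∀ L, 0 < powSum T L := fun L => lt_of_lt_of_le (pow_pos hc L) (hcS L)
  set u : ℕ → ℝ := fun L => Real.log (powSum T L) with hu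
  have hsub : Subadditive u := by
    intro m k
    have h1 : powSum T (m + k) ≤ powSum T m * powSum T k := powSum_add_le hT m k
    have h2 : Real.log (powSum T (m + k)) ≤ Real.log (powSum T m * powSum T k) :=
      Real.log_le_log (hSpos _) h1
    rwa [Real.log_mul (hSpos m).ne' (hSpos k).ne'] at h2
  have hbdd : BddBelow (Set.range fun L : ℕ => u L / L) := by
    refine ⟨min 0 (Real.log c), ?_⟩
    rintro x ⟨L, rfl⟩
    rcases Nat.eq_zero_or_pos L with h | h
    · subst h
      norm_num
    · have hlog : Real.log c * L ≤ u L := by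
        have h2 := Real.log_le_log (pow_pos hc L) (hcS L)
        rwa [Real.log_pow, mul_comm] at h2
      have h3 : Real.log c ≤ u L / L := by
        rw [le_div_iff₀ (by exact_mod_cast h : (0:ℝ) < (L:ℝ))]
        exact hlog
      exact le_trans (min_le_right _ _) h3
  refine ⟨Real.exp hsub.lim, Real.exp_pos _, ?_, ?_⟩
  · intro L
    rcases Nat.eq_zero_or_pos L with h | h
    · subst h
      simpa using hcS 0
    · have h1 : hsub.lim ≤ u L / L := hsub.lim_le_div hbdd (Nat.pos_iff_ne_zero.mp h)
      have h2 : hsub.lim * L ≤ u L := by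
        rw [← le_div_iff₀ (by exact_mod_cast h : (0:ℝ) < (L:ℝ))]
        exact h1
      calc Real.exp hsub.lim ^ L = Real.exp (L * hsub.lim) := (Real.exp_nat_mul _ L).symm
        _ ≤ Real.exp (u L) := Real.exp_le_exp.mpr (by rw [mul_comm] at h2; exact h2)
        _ = powSum T L := Real.exp_log (hSpos L)
  · have ht := hsub.tendsto_lim hbdd
    have heq : ∀ L : ℕ, Real.exp (u L / L) = powSum T L ^ ((L : ℝ)⁻¹) := by
      intro L
      rw [Real.rpow_def_of_pos (hSpos L), div_eq_mul_inv]
    exact Filter.Tendsto.congr heq ((Real.continuous_exp.tendsto _).comp ht)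

end Fekete

/-- for an exact ε-machine with steady state distribution `π`, the limit
`lim_{L→∞} (P_π(NSYN_L))^{1/L}` exists and equals the spectral radius of `T(A₂)`, and this
synchronization rate constant is `< 1`. -/
theorem stmt3 {Q A : Type*} [Fintype Q] [Fintype A] (M : EpsMachine Q A)
    (hexact : IsExact M) (π : Q → ℝ) (hπ : IsStationaryDist M.δ M.P π) :
    Filter.Tendsto (fun L : ℕ => nsynProb M.δ M.P π L ^ ((L : ℝ)⁻¹)) Filter.atTop
        (nhds ((spectralRadius ℝ (pairMatrix M.δ M.P)).toReal)) ∧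
      (spectralRadius ℝ (pairMatrix M.δ M.P)).toReal < 1 := by
  classical
  obtain ⟨hπpos, hπ1, -⟩ := hπ
  have hQne : Nonempty Q := by
    by_contra h
    rw [not_nonempty_iff] at h
    rw [Finset.sum_eq_zero (fun q _ => (h.false q).elim)] at hπ1
    norm_num at hπ1
  rcases isEmpty_or_nonempty (PairState Q) with hE | hNE
  · -- the machine has a single state : no word is generated with positive probability
    -- unless it is a reset word
    have hsing : ∀ p q : Q, p = q := by
      intro p q
      by_contra h
      exact hE.false ⟨(p, q), h⟩
    have hnsyn : ∀ L, nsynProb M.δ M.P π L = 0 := by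
      intro L
      rw [nsynProb]
      refine Finset.sum_eq_zero fun w _ => ?_
      by_cases hres : IsResetWord M.δ (List.ofFn w)
      · rw [if_pos hres]
      · rw [if_neg hres, Ppi]
        refine Finset.sum_eq_zero fun q _ => ?_
        by_cases hpw : probWord M.P M.δ q (List.ofFn w) = 0
        · rw [hpw, mul_zero]
        · obtain ⟨q', hq'⟩ := stepWord_isSome_of_probWord_ne M.zero_iff hpw
          exfalso
          apply hres
          refine ⟨q', ⟨q, hq'⟩, fun q2 s2 h2 => ?_⟩
          rw [hsing q2 q, hq'] at h2
          exact (Option.some_inj.mp h2).symm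
    have hrad : (spectralRadius ℝ (pairMatrix M.δ M.P)).toReal = 0 := by
      have hspec : spectrum ℝ (pairMatrix M.δ M.P) = ∅ := by
        ext x
        simp only [Set.mem_empty_iff_false, iff_false]
        rw [spectrum.mem_iff, not_not]
        exact isUnit_of_subsingleton _
      rw [spectralRadius, hspec]
      simp
    rw [hrad]
    refine ⟨?_, by norm_num⟩
    have hev : ∀ᶠ L : ℕ in Filter.atTop,
        (0 : ℝ) = nsynProb M.δ M.P π L ^ ((L : ℝ)⁻¹) := by
      filter_upwards [Filter.eventually_ge_atTop 1] with L hL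
      rw [hnsyn L, Real.zero_rpow (inv_ne_zero (Nat.cast_ne_zero.mpr (by omega)))]
    exact Filter.Tendsto.congr' hev tendsto_const_nhds
  · -- at least two states
    have hT1 : ∀ s t : PairState Q, 0 ≤ pairMatrix M.δ M.P s t := by
      intro s t
      rw [pairMatrix]
      refine Finset.sum_nonneg fun a _ => ?_
      by_cases h : pairStep M.δ s.val a = some t.val
      · rw [if_pos h]; exact M.nonneg _ _
      · rw [if_neg h]
    have hPS : powSum (pairMatrix M.δ M.P) = SS M.δ M.P := rfl
    have hSS0 : SS M.δ M.P 0 = (Fintype.card (PairState Q) : ℝ) := by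
      unfold SS
      rw [pow_zero]
      have h1 : ∀ s : PairState Q,
          ∑ t : PairState Q, (1 : Matrix (PairState Q) (PairState Q) ℝ) s t = 1 := by
        intro s
        rw [Finset.sum_eq_single s]
        · exact Matrix.one_apply_eq s
        · intro t _ hts
          exact Matrix.one_apply_ne (Ne.symm hts)
        · intro h; exact absurd (Finset.mem_univ s) h
      rw [Finset.sum_congr rfl fun s _ => h1 s, Finset.sum_const, Finset.card_univ,
        nsmul_eq_mul, mul_one]
    have hcard : 0 < Fintype.card (PairState Q) := Fintype.card_pos_iff.mpr hNE
    by_cases hnil : ∃ L0, SS M.δ M.P L0 = 0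
    · -- nilpotent case
      obtain ⟨L0, hL0⟩ := hnil
      have hL0ne : L0 ≠ 0 := by
        intro h
        rw [h, hSS0, Nat.cast_eq_zero] at hL0
        omega
      have hTL0 : (pairMatrix M.δ M.P) ^ L0 = 0 := by
        have hnn := pairMatrix_pow_nonneg M.δ M.P M.nonneg L0
        have hL0' : (∑ s : PairState Q, ∑ t : PairState Q,
            (pairMatrix M.δ M.P ^ L0) s t) = 0 := hL0
        have h1 := (Finset.sum_eq_zero_iff_of_nonneg fun s _ =>
          Finset.sum_nonneg fun t _ => hnn s t).mp hL0'
        ext s t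
        have h2 := (Finset.sum_eq_zero_iff_of_nonneg fun t _ => hnn s t).mp
          (h1 s (Finset.mem_univ s))
        rw [h2 t (Finset.mem_univ t)]
        rfl
      have hSSz : ∀ L, L0 ≤ L → SS M.δ M.P L = 0 := by
        intro L hL
        have h1 := SS_add_le M.δ M.P M.nonneg L0 (L - L0)
        rw [Nat.add_sub_cancel' hL, hL0, zero_mul] at h1
        exact le_antisymm h1 (SS_nonneg M.δ M.P M.nonneg L)
      have hnz : ∀ L, L0 ≤ L → nsynProb M.δ M.P π L = 0 := by
        intro L hL
        refine le_antisymm ?_ (nsynProb_nonneg M.δ M.P π M.nonneg (fun q => (hπpos q).le) L)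
        rw [← hSSz L hL]
        exact nsynProb_le_SS M.δ M.P π M.nonneg M.zero_iff hπpos hπ1 L
      have hub0 : ∀ x ∈ spectrum ℝ (pairMatrix M.δ M.P), |x| ≤ 0 := by
        intro x hx
        have habs := abs_pow_le_powSum hT1 hx L0
        rw [hPS, hL0] at habs
        have h3 : |x| ^ L0 = 0 :=
          le_antisymm habs (pow_nonneg (abs_nonneg x) L0)
        rw [pow_eq_zero_iff hL0ne] at h3
        rw [h3]
      have hrad := spectralRadius_toReal_eq
        (zero_mem_spectrum_of_nilpotent hTL0 hL0ne) hub0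
      rw [hrad]
      refine ⟨?_, by norm_num⟩
      have hev : ∀ᶠ L : ℕ in Filter.atTop,
          (0 : ℝ) = nsynProb M.δ M.P π L ^ ((L : ℝ)⁻¹) := by
        filter_upwards [Filter.eventually_ge_atTop (max L0 1)] with L hL
        rw [hnz L (le_trans (le_max_left _ _) hL),
          Real.zero_rpow (inv_ne_zero (Nat.cast_ne_zero.mpr (by omega)))]
      exact Filter.Tendsto.congr' hev tendsto_const_nhds
    · -- main case : all power sums are positive
      push_neg at hnil
      have hSpos : ∀ L, 0 < SS M.δ M.P L := fun L =>
        lt_of_le_of_ne (SS_nonneg M.δ M.P M.nonneg L) (Ne.symm (hnil L))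
      obtain ⟨c, hc, hcw⟩ := exists_pmin M.δ M.P M.nonneg M.zero_iff
      have hcS : ∀ L : ℕ, c ^ L ≤ powSum (pairMatrix M.δ M.P) L := by
        intro L
        obtain ⟨s, -, hs⟩ := Finset.exists_ne_zero_of_sum_ne_zero (hnil L)
        obtain ⟨t, -, ht⟩ := Finset.exists_ne_zero_of_sum_ne_zero hs
        rw [pairMatrix_pow_apply] at ht
        obtain ⟨w, -, hw⟩ := Finset.exists_ne_zero_of_sum_ne_zero ht
        by_cases hcond : stepWord (pairStep M.δ) s.val (List.ofFn w) = some t.val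
        swap
        · rw [if_neg hcond] at hw; exact absurd rfl hw
        have h1 : stepWord M.δ s.val.1 (List.ofFn w) = some t.val.1 :=
          ((pairStepWord_iff s.property (List.ofFn w) t.val.1 t.val.2).mp hcond).1
        have hlow : c ^ L ≤ probWord M.P M.δ s.val.1 (List.ofFn w) := by
          have h2 := hcw (List.ofFn w) s.val.1 t.val.1 h1
          rwa [List.length_ofFn] at h2
        have hnn := pairMatrix_pow_nonneg M.δ M.P M.nonneg L
        calc c ^ L ≤ probWord M.P M.δ s.val.1 (List.ofFn w) := hlow
          _ ≤ (pairMatrix M.δ M.P ^ L) s t := by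
              rw [pairMatrix_pow_apply]
              have h3 := Finset.single_le_sum (f := fun w' : Fin L → A =>
                if stepWord (pairStep M.δ) s.val (List.ofFn w') = some t.val
                  then probWord M.P M.δ s.val.1 (List.ofFn w') else 0)
                (fun w' _ => by
                  by_cases h4 : stepWord (pairStep M.δ) s.val (List.ofFn w') = some t.val
                  · rw [if_pos h4]; exact probWord_nonneg M.nonneg M.δ _ _
                  · rw [if_neg h4])
                (Finset.mem_univ w)
              rwa [if_pos hcond] at h3
          _ ≤ ∑ t' : PairState Q, (pairMatrix M.δ M.P ^ L) s t' :=
              Finset.single_le_sum (fun t' _ => hnn s t') (Finset.mem_univ t)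
          _ ≤ powSum (pairMatrix M.δ M.P) L :=
              Finset.single_le_sum (f := fun s' : PairState Q =>
                ∑ t' : PairState Q, (pairMatrix M.δ M.P ^ L) s' t')
                (fun s' _ => Finset.sum_nonneg fun t' _ => hnn s' t') (Finset.mem_univ s)
      obtain ⟨r, hrpos, hrS, hSlim⟩ := powSum_tendsto hT1 hc hcS
      have hmem := mem_spectrum_of_powSum hT1 hrpos hrS hSlim
      have hub : ∀ x ∈ spectrum ℝ (pairMatrix M.δ M.P), |x| ≤ r := by
        intro x hx
        refine ge_of_tendsto hSlim ?_
        filter_upwards [Filter.eventually_ge_atTop 1] with L hL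
        have hLne : (L : ℝ) ≠ 0 := Nat.cast_ne_zero.mpr (by omega)
        have habs := abs_pow_le_powSum hT1 hx L
        have h5 : (|x| ^ L) ^ ((L : ℝ)⁻¹) ≤ powSum (pairMatrix M.δ M.P) L ^ ((L : ℝ)⁻¹) :=
          Real.rpow_le_rpow (pow_nonneg (abs_nonneg x) L) habs (by positivity)
        rwa [← Real.rpow_natCast |x| L, ← Real.rpow_mul (abs_nonneg x),
          mul_inv_cancel₀ hLne, Real.rpow_one] at h5
      have hrad := spectralRadius_toReal_eq hmem hub
      rw [hrad]
      constructor
      · -- the limit statement, by squeezing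
        obtain ⟨q0, -, hq0min⟩ := Finset.exists_min_image Finset.univ π
          ⟨Classical.arbitrary Q, Finset.mem_univ _⟩
        have hNpos : (0 : ℝ) < (Fintype.card (PairState Q) : ℝ) := by exact_mod_cast hcard
        set b := π q0 / (Fintype.card (PairState Q) : ℝ) with hb
        have hbpos : 0 < b := div_pos (hπpos q0) hNpos
        have hlow : ∀ L, b * SS M.δ M.P L ≤ nsynProb M.δ M.P π L := by
          intro L
          have h1 : ∀ s : PairState Q,
              π q0 * (∑ t : PairState Q, (pairMatrix M.δ M.P ^ L) s t) ≤
                nsynProb M.δ M.P π L := by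
            intro s
            have h2 := pi_row_le_nsynProb M.δ M.P π M.nonneg (fun q => (hπpos q).le) L s
            have h3 : π q0 * (∑ t : PairState Q, (pairMatrix M.δ M.P ^ L) s t) ≤
                π s.val.1 * (∑ t : PairState Q, (pairMatrix M.δ M.P ^ L) s t) :=
              mul_le_mul_of_nonneg_right (hq0min s.val.1 (Finset.mem_univ _))
                (Finset.sum_nonneg fun t _ => pairMatrix_pow_nonneg M.δ M.P M.nonneg L s t)
            exact le_trans h3 h2
          have h4 : π q0 * SS M.δ M.P L ≤
              (Fintype.card (PairState Q) : ℝ) * nsynProb M.δ M.P π L := by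
            have h5 := Finset.sum_le_sum fun s (_ : s ∈ Finset.univ) => h1 s
            rw [Finset.sum_const, Finset.card_univ, nsmul_eq_mul] at h5
            calc π q0 * SS M.δ M.P L
                = ∑ s : PairState Q, π q0 *
                    (∑ t : PairState Q, (pairMatrix M.δ M.P ^ L) s t) := by
                  unfold SS; rw [Finset.mul_sum]
              _ ≤ _ := h5
          rw [hb, div_mul_eq_mul_div, div_le_iff₀ hNpos]
          linarith [h4]
        have hup : ∀ L, nsynProb M.δ M.P π L ≤ SS M.δ M.P L :=
          nsynProb_le_SS M.δ M.P π M.nonneg M.zero_iff hπpos hπ1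
        -- limits of the bounding sequences
        have hb1 : Filter.Tendsto (fun L : ℕ => b ^ ((L : ℝ)⁻¹)) Filter.atTop (nhds 1) := by
          have h1 : Filter.Tendsto (fun L : ℕ => ((L : ℝ))⁻¹) Filter.atTop (nhds 0) :=
            tendsto_inv_atTop_zero.comp tendsto_natCast_atTop_atTop
          have h3 := h1.const_mul (Real.log b)
          rw [mul_zero] at h3
          have h2 : Filter.Tendsto (fun L : ℕ => Real.exp (Real.log b * ((L : ℝ))⁻¹))
              Filter.atTop (nhds 1) := by
            simpa [Function.comp_def] using (Real.continuous_exp.tendsto 0).comp h3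
          exact h2.congr fun L => (Real.rpow_def_of_pos hbpos _).symm
        have hlowlim : Filter.Tendsto (fun L : ℕ => (b * SS M.δ M.P L) ^ ((L : ℝ)⁻¹))
            Filter.atTop (nhds r) := by
          have heq : ∀ L : ℕ, (b * SS M.δ M.P L) ^ ((L : ℝ)⁻¹)
              = b ^ ((L : ℝ)⁻¹) * SS M.δ M.P L ^ ((L : ℝ)⁻¹) := fun L =>
            Real.mul_rpow hbpos.le (hSpos L).le
          have h6 := hb1.mul hSlim
          rw [one_mul] at h6
          exact Filter.Tendsto.congr (fun L => (heq L).symm) h6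
        refine tendsto_of_tendsto_of_tendsto_of_le_of_le hlowlim hSlim ?_ ?_
        · intro L
          exact Real.rpow_le_rpow (mul_nonneg hbpos.le (hSpos L).le) (hlow L) (by positivity)
        · intro L
          exact Real.rpow_le_rpow
            (nsynProb_nonneg M.δ M.P π M.nonneg (fun q => (hπpos q).le) L) (hup L)
            (by positivity)
      · -- r < 1, via killing words from exactness
        obtain ⟨w0, r0, ⟨q0, hq0⟩, hall⟩ := hexact
        have hkill : ∀ s : PairState Q, ∃ l : List A,
            stepWord (pairStep M.δ) s.val l = none ∧
              ∃ q', stepWord M.δ s.val.1 l = some q' := by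
          intro s
          obtain ⟨u, hu⟩ := M.strong_conn s.val.1 q0
          have hstep1 : stepWord M.δ s.val.1 (u ++ w0) = some r0 := by
            rw [stepWord_append, hu]
            simpa using hq0
          refine ⟨u ++ w0, ?_, ⟨r0, hstep1⟩⟩
          cases hX : stepWord (pairStep M.δ) s.val (u ++ w0) with
          | none => rfl
          | some y =>
            exfalso
            obtain ⟨h1, h2, hne⟩ :=
              (pairStepWord_iff s.property (u ++ w0) y.1 y.2).mp hX
            have hy1 : y.1 = r0 := by
              rw [hstep1] at h1
              exact (Option.some_inj.mp h1).symm
            have hy2 : y.2 = r0 := by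
              rw [stepWord_append] at h2
              cases hz : stepWord M.δ s.val.2 u with
              | none => rw [hz] at h2; simp at h2
              | some z =>
                rw [hz] at h2
                simp only [Option.bind_some] at h2
                exact hall z y.2 h2
            exact hne (hy1.trans hy2.symm)
        choose v hv1 hv2 using hkill
        have hext : ∀ (k : ℕ) (q : Q), ∃ z : List A, z.length = k ∧
            ∃ q', stepWord M.δ q z = some q' := by
          intro k
          induction k with
          | zero => intro q; exact ⟨[], rfl, ⟨q, rfl⟩⟩
          | succ k ih =>
            intro q
            have hA : ∃ a : A, M.P q a ≠ 0 := by
              by_contra hno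
              push_neg at hno
              have h7 := M.sum_one q
              rw [Finset.sum_eq_zero (fun a _ => hno a)] at h7
              norm_num at h7
            obtain ⟨a, ha⟩ := hA
            have hd : ∃ q1, M.δ q a = some q1 := by
              cases hd : M.δ q a with
              | none => exact absurd ((M.zero_iff q a).mpr hd) ha
              | some q1 => exact ⟨q1, rfl⟩
            obtain ⟨q1, hq1⟩ := hd
            obtain ⟨z, hzlen, q', hq'⟩ := ih q1
            refine ⟨a :: z, by simp [hzlen], ⟨q', ?_⟩⟩
            rw [stepWord, hq1]
            simpa using hq'
        set m := Finset.univ.sup (fun s : PairState Q => (v s).length) with hm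
        have hWall : ∀ s : PairState Q, ∃ l : List A, l.length = m ∧
            stepWord (pairStep M.δ) s.val l = none ∧
              0 < probWord M.P M.δ s.val.1 l := by
          intro s
          obtain ⟨q', hq'⟩ := hv2 s
          obtain ⟨z, hzlen, q'', hq''⟩ := hext (m - (v s).length) q'
          have hvle : (v s).length ≤ m := by
            rw [hm]
            exact Finset.le_sup (f := fun s : PairState Q => (v s).length)
              (Finset.mem_univ s)
          refine ⟨v s ++ z, ?_, ?_, ?_⟩
          · rw [List.length_append, hzlen]; omega
          · rw [stepWord_append, hv1 s]; rfl
          · have hstep : stepWord M.δ s.val.1 (v s ++ z) = some q'' := by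
              rw [stepWord_append, hq']
              simpa using hq''
            exact probWord_pos M.nonneg M.zero_iff hstep
        choose W hWlen hWdead hWpos using hWall
        have hrowb : ∀ s : PairState Q, ∑ t : PairState Q, (pairMatrix M.δ M.P ^ m) s t ≤
            1 - probWord M.P M.δ s.val.1 (W s) := by
          intro s
          have h := row_le_of_kill M.δ M.P M.nonneg M.zero_iff M.sum_one s (W s) (hWdead s)
          rwa [hWlen s] at h
        obtain ⟨s0, -, hs0min⟩ := Finset.exists_min_image Finset.univ
          (fun s : PairState Q => probWord M.P M.δ s.val.1 (W s)) ⟨hNE.some, Finset.mem_univ _⟩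
        set ε := probWord M.P M.δ s0.val.1 (W s0) with hεdef
        have hεpos : 0 < ε := hWpos s0
        have hε1 : ε ≤ 1 :=
          probWord_le_one M.δ M.P M.nonneg M.zero_iff M.sum_one _ _
        have hθ : ∀ u : PairState Q, ∑ t : PairState Q, (pairMatrix M.δ M.P ^ m) u t ≤ 1 - ε :=
          fun u => le_trans (hrowb u) (by
            have := hs0min u (Finset.mem_univ u)
            linarith)
        have hdecay : ∀ k : ℕ, SS M.δ M.P (k * m) ≤ SS M.δ M.P 0 * (1 - ε) ^ k := by
          intro k
          induction k with
          | zero => simp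
          | succ k ih =>
            have h1 : SS M.δ M.P ((k + 1) * m) ≤ SS M.δ M.P (k * m) * (1 - ε) := by
              have h2 := SS_decay M.δ M.P M.nonneg hθ (k * m)
              rwa [show (k + 1) * m = k * m + m by ring]
            calc SS M.δ M.P ((k + 1) * m) ≤ SS M.δ M.P (k * m) * (1 - ε) := h1
              _ ≤ (SS M.δ M.P 0 * (1 - ε) ^ k) * (1 - ε) :=
                  mul_le_mul_of_nonneg_right ih (by linarith)
              _ = SS M.δ M.P 0 * (1 - ε) ^ (k + 1) := by ring
        by_contra hge
        push_neg at hge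
        have h2 : ∀ k : ℕ, (1 : ℝ) ≤ SS M.δ M.P 0 * (1 - ε) ^ k := by
          intro k
          calc (1 : ℝ) = 1 ^ (k * m) := (one_pow _).symm
            _ ≤ r ^ (k * m) := pow_le_pow_left₀ (by norm_num) hge _
            _ ≤ SS M.δ M.P (k * m) := hrS (k * m)
            _ ≤ SS M.δ M.P 0 * (1 - ε) ^ k := hdecay k
        have h3 : Filter.Tendsto (fun k : ℕ => SS M.δ M.P 0 * (1 - ε) ^ k)
            Filter.atTop (nhds 0) := by
          have h4 := (tendsto_pow_atTop_nhds_zero_of_lt_one (by linarith) (by linarith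
            : (1:ℝ) - ε < 1)).const_mul (SS M.δ M.P 0)
          simpa using h4
        have h5 := h3.eventually_lt_const (show (0 : ℝ) < 1 by norm_num)
        obtain ⟨k, hk⟩ := h5.exists
        exact absurd (h2 k) (not_le.mpr hk)
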